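/- Geometric decay of the negative part near a Lipschitz graph: There exists a universal constant c₀ ∈ (0,1) such that for every δ ∈ (0, 1/4] the following holds. Let A be uniformly elliptic on C_1 and let w ∈ C²(C_1) satisfy tr(A D²w) = 0 in C_1 and vanish continuously on Γ. If w ≥ −1 on C_1 and w ≥ 0 on C_1 \ C(1, δ), then for every positive integer k with kδ ≤ 1/2 one has w ≥ −(1 − c₀)^k on C_{1−kδ}; in particular w ≥ −(1 − c₀)^{⌊1/(4δ)⌋} on C_{1/2}. -/

import Mathlib

open MeasureTheory Metric Filter

set_option maxHeartbeats 1000000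

noncomputable section

/-- `ℝ^n` with the Euclidean norm. -/
abbrev Eucl (n : ℕ) : Type := EuclideanSpace ℝ (Fin n)

/-- Uniform ellipticity of the coefficient matrix `A` on `Ω`:
`λ|ξ|² ≤ ξ·(A(x)ξ)` and `|A(x)ξ| ≤ Λ|ξ|`. -/
def UnifElliptic {n : ℕ} (lam Lam : ℝ) (Ω : Set (Eucl n))
    (A : Eucl n → Matrix (Fin n) (Fin n) ℝ) : Prop :=
  ∀ x ∈ Ω, ∀ ξ : Eucl n,
    lam * ‖ξ‖ ^ 2 ≤ ∑ i, ξ i * ∑ j, A x i j * ξ j ∧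
    Real.sqrt (∑ i, (∑ j, A x i j * ξ j) ^ 2) ≤ Lam * ‖ξ‖

/-- `u` is a `C²` solution of `tr(A D²u) = 0` on the open set `Ω`. -/
def NondivSolution {n : ℕ} (A : Eucl n → Matrix (Fin n) (Fin n) ℝ) (Ω : Set (Eucl n))
    (u : Eucl n → ℝ) : Prop :=
  ContDiffOn ℝ 2 u Ω ∧ ∀ x ∈ Ω,
    ∑ i, ∑ j, A x i j *
      fderiv ℝ (fun y => fderiv ℝ u y (EuclideanSpace.single i 1)) x
        (EuclideanSpace.single j 1) = 0

/-- The first `d` coordinates of a point in `ℝ^{d+1}`. -/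
def ehead {d : ℕ} (x : Eucl (d + 1)) : Eucl d := WithLp.toLp 2 (fun i : Fin d => x i.castSucc)

/-- The last coordinate of a point in `ℝ^{d+1}`. -/
def elast {d : ℕ} (x : Eucl (d + 1)) : ℝ := x (Fin.last d)

/-- `h_Γ(x) = x_n - g(x')`. -/
def hG {d : ℕ} (g : Eucl d → ℝ) (x : Eucl (d + 1)) : ℝ := elast x - g (ehead x)

/-- The cylindrical region `C(r,ρ) = {|x'| < r, 0 < h_Γ(x) < ρ}` above the graph of `g`. -/
def cylC {d : ℕ} (g : Eucl d → ℝ) (r ρ : ℝ) : Set (Eucl (d + 1)) :=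
  {x | ‖ehead x‖ < r ∧ 0 < hG g x ∧ hG g x < ρ}

/-- `u` vanishes continuously on the part of the graph `Γ` with `|x₀'| < r`,
as a function on `Ω`. -/
def VanishesOnGraph {d : ℕ} (g : Eucl d → ℝ) (r : ℝ) (Ω : Set (Eucl (d + 1)))
    (u : Eucl (d + 1) → ℝ) : Prop :=
  ∀ x₀ : Eucl (d + 1), ‖ehead x₀‖ < r → elast x₀ = g (ehead x₀) →
    Tendsto u (nhdsWithin x₀ Ω) (nhds 0)

/-- The point `e_n / 2`. -/
def enHalf (d : ℕ) : Eucl (d + 1) := (1 / 2 : ℝ) • EuclideanSpace.single (Fin.last d) 1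

/- ===== auxiliary definitions ===== -/

def Hc {n : ℕ} (f : Eucl n → ℝ) (x : Eucl n) (i j : Fin n) : ℝ :=
  fderiv ℝ (fun y => fderiv ℝ f y (EuclideanSpace.single i 1)) x (EuclideanSpace.single j 1)

def Qf {n : ℕ} (z : Eucl n) (y : Eucl n) : ℝ := ∑ i, (y i - z i)^2
def bump {n : ℕ} (z : Eucl n) (e : ℝ) (y : Eucl n) : ℝ := (Qf z y) ^ e
def psif {n : ℕ} (i₀ : Fin n) (C : ℝ) (y : Eucl n) : ℝ := C - Real.exp (y i₀)
def en (d : ℕ) : Eucl (d + 1) := EuclideanSpace.single (Fin.last d) (1:ℝ)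

def pexp (n : ℕ) (lam Lam : ℝ) : ℝ := (n : ℝ) * Lam / lam
def thconst (n : ℕ) (lam Lam : ℝ) : ℝ :=
  ((2:ℝ) ^ (-(pexp n lam Lam)) - (4:ℝ) ^ (-(pexp n lam Lam)))
    / (1 - (4:ℝ) ^ (-(pexp n lam Lam)))
section Chunk1




variable {n : ℕ} {f g : Eucl n → ℝ} {x : Eucl n}

lemma eventually_diff (hf : ContDiffAt ℝ 2 f x) : ∀ᶠ y in nhds x, DifferentiableAt ℝ f y := by
  have h := hf.eventually (by norm_num)
  exact h.mono fun y hy => hy.differentiableAt (by norm_num)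

lemma hasFDerivAt_fderiv (hf : ContDiffAt ℝ 2 f x) :
    HasFDerivAt (fderiv ℝ f) (fderiv ℝ (fderiv ℝ f) x) x := by
  have h1 : ContDiffAt ℝ 1 (fderiv ℝ f) x := hf.fderiv_right (by norm_num)
  exact (h1.differentiableAt (by norm_num)).hasFDerivAt

lemma diffAt_fderiv_apply (hf : ContDiffAt ℝ 2 f x) (v : Eucl n) :
    DifferentiableAt ℝ (fun y => fderiv ℝ f y v) x := by
  have h1 : DifferentiableAt ℝ (fderiv ℝ f) x := (hasFDerivAt_fderiv hf).differentiableAt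
  exact (ContinuousLinearMap.apply ℝ ℝ v).differentiableAt.comp x h1

lemma hasFDerivAt_fderiv_apply (hf : ContDiffAt ℝ 2 f x) (v : Eucl n) :
    HasFDerivAt (fun y => fderiv ℝ f y v)
      ((ContinuousLinearMap.apply ℝ ℝ v).comp (fderiv ℝ (fderiv ℝ f) x)) x :=
  (ContinuousLinearMap.apply ℝ ℝ v).hasFDerivAt.comp x (hasFDerivAt_fderiv hf)

lemma Hc_eq_snd (hf : ContDiffAt ℝ 2 f x) (i j : Fin n) :
    Hc f x i j = fderiv ℝ (fderiv ℝ f) x (EuclideanSpace.single j 1) (EuclideanSpace.single i 1) := by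
  have := (hasFDerivAt_fderiv_apply hf (EuclideanSpace.single i 1)).fderiv
  simp only [Hc, this]; rfl

lemma Hc_symm (hf : ContDiffAt ℝ 2 f x) (i j : Fin n) : Hc f x i j = Hc f x j i := by
  rw [Hc_eq_snd hf, Hc_eq_snd hf]
  exact second_derivative_symmetric_of_eventually_of_real
    ((eventually_diff hf).mono fun y hy => hy.hasFDerivAt) (hasFDerivAt_fderiv hf) _ _

lemma esum_single (ξ : Eucl n) :
    ξ = ∑ i, ξ i • (EuclideanSpace.single i (1:ℝ)) := by
  have := (EuclideanSpace.basisFun (Fin n) ℝ).sum_repr ξ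
  simp only [EuclideanSpace.basisFun_repr, EuclideanSpace.basisFun_apply] at this
  exact this.symm

lemma snd_quad_eq (hf : ContDiffAt ℝ 2 f x) (ξ : Eucl n) :
    fderiv ℝ (fderiv ℝ f) x ξ ξ = ∑ i, ∑ j, ξ i * ξ j * Hc f x i j := by
  set B := fderiv ℝ (fderiv ℝ f) x with hB
  have key : ∀ (T : Eucl n →L[ℝ] ℝ), T ξ = ∑ i, ξ i * T (EuclideanSpace.single i (1:ℝ)) := by
    intro T
    conv_lhs => rw [esum_single ξ]
    rw [map_sum]
    exact Finset.sum_congr rfl fun i _ => by rw [_root_.map_smul, smul_eq_mul]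
  have h1 : B ξ ξ = ∑ i, ξ i * B ξ (EuclideanSpace.single i (1:ℝ)) := key (B ξ)
  have h2 : ∀ i, B ξ (EuclideanSpace.single i (1:ℝ))
      = ∑ j, ξ j * B (EuclideanSpace.single j (1:ℝ)) (EuclideanSpace.single i (1:ℝ)) := by
    intro i
    have := key (B.flip (EuclideanSpace.single i (1:ℝ)))
    simpa using this
  rw [h1]
  refine Finset.sum_congr rfl fun i _ => ?_
  rw [h2 i, Finset.mul_sum]
  refine Finset.sum_congr rfl fun j _ => ?_
  rw [Hc_eq_snd hf]; ring

/-- second-order test at a local minimum -/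
lemma isLocalMin_snd_nonneg (hf : ContDiffAt ℝ 2 f x) (hmin : IsLocalMin f x) (ξ : Eucl n) :
    0 ≤ fderiv ℝ (fderiv ℝ f) x ξ ξ := by
  by_contra hneg
  push_neg at hneg
  set c := fderiv ℝ (fderiv ℝ f) x ξ ξ with hc
  set ℓ : ℝ → Eucl n := fun t => x + t • ξ with hℓdef
  have hℓ : ∀ t : ℝ, HasDerivAt ℓ ξ t := by
    intro t
    simpa [hℓdef] using ((hasDerivAt_id t).smul_const ξ).const_add x
  have hℓ0 : ℓ 0 = x := by simp [hℓdef]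
  have hc0 : Tendsto ℓ (nhds 0) (nhds x) := by
    rw [← hℓ0]
    exact (continuous_const.add (continuous_id.smul continuous_const)).continuousAt
  set φ : ℝ → ℝ := fun t => f (ℓ t) with hφdef
  set G : ℝ → ℝ := fun t => fderiv ℝ f (ℓ t) ξ with hGdef
  have hev : ∀ᶠ t in nhds (0:ℝ), DifferentiableAt ℝ f (ℓ t) := hc0.eventually (eventually_diff hf)
  have hφderiv : ∀ᶠ t in nhds (0:ℝ), HasDerivAt φ (G t) t := by
    refine hev.mono fun t ht => ?_
    exact ht.hasFDerivAt.comp_hasDerivAt t (hℓ t)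
  have hG : HasDerivAt G c 0 := by
    have h2 : HasFDerivAt (fderiv ℝ f) (fderiv ℝ (fderiv ℝ f) x) (ℓ 0) := by
      rw [hℓ0]; exact hasFDerivAt_fderiv hf
    have h3 : HasDerivAt (fun t => fderiv ℝ f (ℓ t)) (fderiv ℝ (fderiv ℝ f) x ξ) 0 :=
      h2.comp_hasDerivAt 0 (hℓ 0)
    have h4 := (ContinuousLinearMap.apply ℝ ℝ ξ).hasFDerivAt.comp_hasDerivAt 0 h3
    exact h4
  have hG0 : G 0 = 0 := by
    simp only [hGdef, hℓ0, hmin.fderiv_eq_zero]; rfl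
  have hslope : ∀ᶠ t in nhdsWithin (0:ℝ) {(0:ℝ)}ᶜ, G t / t < c / 2 := by
    have h := hasDerivAt_iff_tendsto_slope.mp hG
    have h5 := h.eventually (isOpen_Iio.eventually_mem (show c ∈ Set.Iio (c/2) by
      simp only [Set.mem_Iio]; linarith))
    refine h5.mono fun t ht => ?_
    rw [slope_def_field, hG0, sub_zero, sub_zero] at ht
    simpa using ht
  have hφmin : ∀ᶠ t in nhds (0:ℝ), φ 0 ≤ φ t := by
    have := hc0.eventually hmin
    refine this.mono fun t ht => ?_
    simpa [hφdef, hℓ0] using ht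
  rw [eventually_nhdsWithin_iff] at hslope
  obtain ⟨ε, hε, hball⟩ := Metric.eventually_nhds_iff_ball.mp (hslope.and (hφderiv.and hφmin))
  have hmem : ∀ t : ℝ, 0 ≤ t → t < ε → t ∈ Metric.ball (0:ℝ) ε := by
    intro t h0 h1
    simp only [Metric.mem_ball, Real.dist_eq, sub_zero]
    rwa [abs_of_nonneg h0]
  have hGneg : ∀ t ∈ Set.Ioo (0:ℝ) ε, G t < 0 := by
    intro t ht
    have h6 := (hball t (hmem t ht.1.le ht.2)).1 (by
      simp only [Set.mem_compl_iff, Set.mem_singleton_iff]; exact ne_of_gt ht.1)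
    have h7 : G t < t * (c/2) := by
      rw [div_lt_iff₀ ht.1] at h6; linarith
    nlinarith [ht.1]
  have hεq : 0 < ε/2 := by linarith
  have hanti : StrictAntiOn φ (Set.Icc 0 (ε/2)) := by
    apply strictAntiOn_of_deriv_neg (convex_Icc _ _)
    · intro t ht
      exact ((hball t (hmem t ht.1 (by linarith [ht.2]))).2.1).continuousAt.continuousWithinAt
    · intro t ht
      rw [interior_Icc] at ht
      rw [((hball t (hmem t ht.1.le (by linarith [ht.2]))).2.1).deriv]
      exact hGneg t ⟨ht.1, by linarith [ht.2]⟩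
  have h7 : φ (ε/2) < φ 0 :=
    hanti (by constructor <;> linarith) (by constructor <;> linarith) (by linarith)
  have h8 : φ 0 ≤ φ (ε/2) := (hball _ (hmem _ hεq.le (by linarith))).2.2
  linarith

lemma isLocalMin_Hc_quad_nonneg (hf : ContDiffAt ℝ 2 f x) (hmin : IsLocalMin f x) (ξ : Eucl n) :
    0 ≤ ∑ i, ∑ j, ξ i * ξ j * Hc f x i j := by
  rw [← snd_quad_eq hf]
  exact isLocalMin_snd_nonneg hf hmin ξ

end Chunk1
section Chunk2



open scoped MatrixOrder in
lemma trace_prod_nonneg {n : ℕ} {lam : ℝ} (hlam : 0 ≤ lam) (B : Matrix (Fin n) (Fin n) ℝ)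
    (hell : ∀ ξ : Eucl n, lam * ‖ξ‖ ^ 2 ≤ ∑ i, ξ i * ∑ j, B i j * ξ j)
    (M : Fin n → Fin n → ℝ) (hsym : ∀ i j, M i j = M j i)
    (hpsd : ∀ ξ : Eucl n, 0 ≤ ∑ i, ∑ j, ξ i * ξ j * M i j) :
    0 ≤ ∑ i, ∑ j, B i j * M i j := by
  classical
  set Mm : Matrix (Fin n) (Fin n) ℝ := Matrix.of (fun i j => M i j) with hMm
  have hpos : Mm.PosSemidef := by
    apply Matrix.PosSemidef.of_dotProduct_mulVec_nonneg
    · ext i j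
      simp only [Matrix.conjTranspose_apply, hMm, Matrix.of_apply, star_trivial]
      exact hsym j i
    · intro v
      have h0 := hpsd ((WithLp.equiv 2 (Fin n → ℝ)).symm v)
      simp only [dotProduct, Matrix.mulVec, star_trivial]
      refine le_trans h0 (le_of_eq ?_)
      have : ∀ i, (∑ j, (WithLp.equiv 2 (Fin n → ℝ)).symm v i *
          (WithLp.equiv 2 (Fin n → ℝ)).symm v j * M i j) = v i * ∑ j, Mm i j * v j := by
        intro i
        rw [Finset.mul_sum]
        refine Finset.sum_congr rfl fun j _ => ?_
        simp only [hMm, Matrix.of_apply, WithLp.equiv_symm_apply, WithLp.ofLp_toLp]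
        ring
      rw [Finset.sum_congr rfl (fun i _ => this i)]
  set S := CFC.sqrt Mm with hS
  have hSS : S * S = Mm := CFC.sqrt_mul_sqrt_self Mm hpos.nonneg
  have hSherm : S.IsHermitian := (Matrix.nonneg_iff_posSemidef.mp (CFC.sqrt_nonneg Mm)).1
  have hMentry : ∀ i j, M i j = ∑ k, S i k * S k j := by
    intro i j
    have : Mm i j = (S * S) i j := by rw [hSS]
    simpa [Matrix.mul_apply, hMm] using this
  have hSsymm : ∀ i k, S i k = S k i := by
    intro i k
    have := congrFun (congrFun hSherm.symm k) i
    simpa [Matrix.conjTranspose_apply, star_trivial] using this.symm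
  calc (0:ℝ) ≤ ∑ k, (lam * ‖(WithLp.equiv 2 (Fin n → ℝ)).symm (fun i => S k i)‖ ^ 2) := by
        refine Finset.sum_nonneg fun k _ => ?_
        positivity
    _ ≤ ∑ k, ∑ i, S k i * ∑ j, B i j * S k j := by
        refine Finset.sum_le_sum fun k _ => ?_
        exact hell _
    _ = ∑ i, ∑ j, B i j * M i j := by
        rw [Finset.sum_comm]
        refine Finset.sum_congr rfl fun i _ => ?_
        have h1 : ∀ k, S k i * ∑ j, B i j * S k j = ∑ j, B i j * (S i k * S k j) := by
          intro k
          rw [Finset.mul_sum]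
          refine Finset.sum_congr rfl fun j _ => ?_
          rw [hSsymm i k]; ring
        rw [Finset.sum_congr rfl (fun k _ => h1 k), Finset.sum_comm]
        refine Finset.sum_congr rfl fun j _ => ?_
        rw [← Finset.mul_sum, hMentry i j]

end Chunk2
section Chunk3




variable {n : ℕ} {x y z : Eucl n}

/-- `Q(y) = ∑ (y i - z i)²` -/



lemma Qf_eq_norm (z y : Eucl n) : Qf z y = ‖y - z‖^2 := by
  rw [EuclideanSpace.norm_eq]
  rw [Real.sq_sqrt (by positivity)]
  refine Finset.sum_congr rfl fun i _ => ?_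
  rw [PiLp.sub_apply, Real.norm_eq_abs, sq_abs]

lemma Qf_pos (h : y ≠ z) : 0 < Qf z y := by
  rw [Qf_eq_norm]
  have h0 : y - z ≠ 0 := sub_ne_zero.mpr h
  have h2 : 0 < ‖y - z‖ := norm_pos_iff.mpr h0
  positivity

lemma hasFDerivAt_Qf (z y : Eucl n) :
    HasFDerivAt (Qf z)
      (∑ i, (2*(y i - z i)) • (EuclideanSpace.proj i : Eucl n →L[ℝ] ℝ)) y := by
  have h : ∀ i ∈ Finset.univ, HasFDerivAt (fun y : Eucl n => (y i - z i)^2)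
      ((2*(y i - z i)) • (EuclideanSpace.proj i : Eucl n →L[ℝ] ℝ)) y := by
    intro i _
    have h1 : HasFDerivAt (fun y : Eucl n => y i - z i)
        (EuclideanSpace.proj i : Eucl n →L[ℝ] ℝ) y :=
      (EuclideanSpace.proj (𝕜 := ℝ) i).hasFDerivAt.sub_const _
    have h2 := h1.fun_mul h1
    simpa [pow_two, two_mul, add_smul] using h2
  exact HasFDerivAt.fun_sum h

lemma Qf_deriv_apply (z y : Eucl n) (i : Fin n) :
    (∑ k, (2*(y k - z k)) • (EuclideanSpace.proj k : Eucl n →L[ℝ] ℝ))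
      (EuclideanSpace.single i 1) = 2*(y i - z i) := by
  rw [ContinuousLinearMap.sum_apply]
  have : ∀ k, ((2*(y k - z k)) • (EuclideanSpace.proj k : Eucl n →L[ℝ] ℝ))
      (EuclideanSpace.single i 1) = if k = i then 2*(y k - z k) else 0 := by
    intro k
    rw [ContinuousLinearMap.smul_apply]
    have : (EuclideanSpace.proj k : Eucl n →L[ℝ] ℝ) (EuclideanSpace.single i 1)
        = if k = i then 1 else 0 := by
      simp [EuclideanSpace.proj, EuclideanSpace.single_apply]
    rw [this]
    by_cases hk : k = i <;> simp [hk]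
  rw [Finset.sum_congr rfl fun k _ => this k]
  simp

lemma contDiffAt_Qf (z y : Eucl n) : ContDiffAt ℝ 2 (Qf z) y := by
  have : ContDiff ℝ 2 (Qf z) := by
    apply ContDiff.sum
    intro i _
    have h1 : ContDiff ℝ 2 (fun y : Eucl n => y i - z i) :=
      ((EuclideanSpace.proj (𝕜 := ℝ) i).contDiff).sub contDiff_const
    exact h1.pow 2
  exact this.contDiffAt

lemma contDiffAt_bump {e : ℝ} (h : y ≠ z) : ContDiffAt ℝ 2 (bump z e) y :=
  (contDiffAt_Qf z y).rpow_const_of_ne (ne_of_gt (Qf_pos h))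

lemma hasFDerivAt_bump {e : ℝ} (h : y ≠ z) :
    HasFDerivAt (bump z e)
      ((e * (Qf z y) ^ (e-1)) • (∑ i, (2*(y i - z i)) • (EuclideanSpace.proj i : Eucl n →L[ℝ] ℝ))) y :=
  (hasFDerivAt_Qf z y).rpow_const (Or.inl (ne_of_gt (Qf_pos h)))

lemma fderiv_bump_apply {e : ℝ} (h : y ≠ z) (i : Fin n) :
    fderiv ℝ (bump z e) y (EuclideanSpace.single i 1)
      = 2 * e * (y i - z i) * (Qf z y) ^ (e-1) := by
  rw [(hasFDerivAt_bump h).fderiv, ContinuousLinearMap.smul_apply, Qf_deriv_apply,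
    smul_eq_mul]
  ring

lemma Hc_bump {e : ℝ} (h : x ≠ z) (i j : Fin n) :
    Hc (bump z e) x i j
      = 2*e*(Qf z x)^(e-1) * (if i = j then 1 else 0)
        + 4*e*(e-1)*(x i - z i)*(x j - z j)*(Qf z x)^(e-2) := by
  have hev : (fun y => fderiv ℝ (bump z e) y (EuclideanSpace.single i 1))
      =ᶠ[nhds x] (fun y => 2 * e * ((y i - z i) * (Qf z y) ^ (e-1))) := by
    filter_upwards [isOpen_ne.mem_nhds h] with y hy
    rw [fderiv_bump_apply hy i]; ring
  rw [Hc, hev.fderiv_eq]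
  have h1 : HasFDerivAt (fun y : Eucl n => y i - z i)
      (EuclideanSpace.proj i : Eucl n →L[ℝ] ℝ) x :=
    (EuclideanSpace.proj (𝕜 := ℝ) i).hasFDerivAt.sub_const _
  have h2 : HasFDerivAt (fun y : Eucl n => (Qf z y)^(e-1))
      (((e-1) * (Qf z x) ^ (e-1-1)) •
        (∑ k, (2*(x k - z k)) • (EuclideanSpace.proj k : Eucl n →L[ℝ] ℝ))) x :=
    (hasFDerivAt_Qf z x).rpow_const (Or.inl (ne_of_gt (Qf_pos h)))
  have h3 := (h1.fun_mul h2).const_mul (2*e)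
  rw [h3.fderiv, ContinuousLinearMap.smul_apply, ContinuousLinearMap.add_apply,
    ContinuousLinearMap.smul_apply, ContinuousLinearMap.smul_apply,
    ContinuousLinearMap.smul_apply, Qf_deriv_apply]
  have hproj : (EuclideanSpace.proj i : Eucl n →L[ℝ] ℝ) (EuclideanSpace.single j 1)
      = if i = j then 1 else 0 := by
    simp [EuclideanSpace.proj, EuclideanSpace.single_apply]
  rw [hproj]
  have he : e - 1 - 1 = e - 2 := by ring
  rw [he]
  simp only [smul_eq_mul]
  ring

lemma hasFDerivAt_psif (i₀ : Fin n) (C : ℝ) (y : Eucl n) :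
    HasFDerivAt (psif i₀ C) (-(Real.exp (y i₀)) •
      (EuclideanSpace.proj i₀ : Eucl n →L[ℝ] ℝ)) y := by
  have h1 : HasFDerivAt (fun y : Eucl n => y i₀)
      (EuclideanSpace.proj i₀ : Eucl n →L[ℝ] ℝ) y :=
    (EuclideanSpace.proj (𝕜 := ℝ) i₀).hasFDerivAt
  have h2 := h1.exp
  have h3 := h2.const_sub C
  rw [neg_smul]
  exact h3

lemma contDiffAt_psif (i₀ : Fin n) (C : ℝ) (y : Eucl n) : ContDiffAt ℝ 2 (psif i₀ C) y := by
  have : ContDiff ℝ 2 (psif i₀ C) :=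
    contDiff_const.sub (Real.contDiff_exp.comp (EuclideanSpace.proj (𝕜 := ℝ) i₀).contDiff)
  exact this.contDiffAt

lemma Hc_psif (i₀ : Fin n) (C : ℝ) (x : Eucl n) (i j : Fin n) :
    Hc (psif i₀ C) x i j
      = -(Real.exp (x i₀)) * (if i₀ = i then 1 else 0) * (if i₀ = j then 1 else 0) := by
  have hproj : ∀ (k l : Fin n), (EuclideanSpace.proj k : Eucl n →L[ℝ] ℝ)
      (EuclideanSpace.single l 1) = if k = l then 1 else 0 := by
    intro k l; simp [EuclideanSpace.proj, EuclideanSpace.single_apply]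
  have hev : (fun y => fderiv ℝ (psif i₀ C) y (EuclideanSpace.single i 1))
      = (fun y => (if i₀ = i then 1 else 0) * (-(Real.exp (y i₀)))) := by
    funext y
    rw [(hasFDerivAt_psif i₀ C y).fderiv, ContinuousLinearMap.smul_apply, hproj]
    by_cases hi : i₀ = i <;> simp [hi]
  rw [Hc, hev]
  have h1 : HasFDerivAt (fun y : Eucl n => y i₀)
      (EuclideanSpace.proj i₀ : Eucl n →L[ℝ] ℝ) x :=
    (EuclideanSpace.proj (𝕜 := ℝ) i₀).hasFDerivAt
  have h2 := (h1.exp.fun_neg).const_mul (if i₀ = i then (1:ℝ) else 0)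
  rw [h2.fderiv, ContinuousLinearMap.smul_apply, ContinuousLinearMap.neg_apply,
    ContinuousLinearMap.smul_apply, hproj]
  simp only [smul_eq_mul]
  ring

end Chunk3
section Chunk4





-- these are proved in other parts; assume for检查

variable {n : ℕ} {x z : Eucl n} {f g : Eucl n → ℝ}

lemma Hc_comb (a b : ℝ) (hf : ContDiffAt ℝ 2 f x) (hg : ContDiffAt ℝ 2 g x) (i j : Fin n) :
    Hc (fun y => a * f y + b * g y) x i j = a * Hc f x i j + b * Hc g x i j := by
  have hev : (fun y => fderiv ℝ (fun t => a * f t + b * g t) y (EuclideanSpace.single i 1))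
      =ᶠ[nhds x] (fun y => a * fderiv ℝ f y (EuclideanSpace.single i 1)
        + b * fderiv ℝ g y (EuclideanSpace.single i 1)) := by
    filter_upwards [eventually_diff hf, eventually_diff hg] with y hfy hgy
    have h1 : fderiv ℝ (fun t => a * f t + b * g t) y
        = a • fderiv ℝ f y + b • fderiv ℝ g y := by
      rw [fderiv_fun_add (hfy.const_mul a) (hgy.const_mul b),
        fderiv_const_mul hfy a, fderiv_const_mul hgy b]
    rw [h1]
    simp
  rw [Hc, hev.fderiv_eq]
  have d1 : DifferentiableAt ℝ (fun y => fderiv ℝ f y (EuclideanSpace.single i 1)) x :=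
    diffAt_fderiv_apply hf _
  have d2 : DifferentiableAt ℝ (fun y => fderiv ℝ g y (EuclideanSpace.single i 1)) x :=
    diffAt_fderiv_apply hg _
  rw [fderiv_fun_add (d1.const_mul a) (d2.const_mul b), fderiv_const_mul d1 a,
    fderiv_const_mul d2 b]
  simp [Hc]

lemma Hc_add_const (C : ℝ) (hf : ContDiffAt ℝ 2 f x) (i j : Fin n) :
    Hc (fun y => f y + C) x i j = Hc f x i j := by
  have hev : (fun y => fderiv ℝ (fun t => f t + C) y (EuclideanSpace.single i 1))
      =ᶠ[nhds x] (fun y => fderiv ℝ f y (EuclideanSpace.single i 1)) := by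
    filter_upwards [eventually_diff hf] with y hfy
    rw [fderiv_add_const]
  rw [Hc, hev.fderiv_eq, Hc]

/-- diagonal entries are bounded above by `Lam` -/
lemma ell_diag_le {lam Lam : ℝ} (B : Matrix (Fin n) (Fin n) ℝ)
    (hell : ∀ ξ : Eucl n, lam * ‖ξ‖ ^ 2 ≤ (∑ i, ξ i * ∑ j, B i j * ξ j) ∧
      Real.sqrt (∑ i, (∑ j, B i j * ξ j) ^ 2) ≤ Lam * ‖ξ‖) (i : Fin n) :
    B i i ≤ Lam := by
  have h := (hell (EuclideanSpace.single i 1)).2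
  have hs : ∀ k, (∑ j, B k j * (EuclideanSpace.single i (1:ℝ)) j) = B k i := by
    intro k
    have : ∀ j, B k j * (EuclideanSpace.single i (1:ℝ)) j
        = if j = i then B k j else 0 := by
      intro j
      rw [EuclideanSpace.single_apply]
      by_cases hj : j = i <;> simp [hj]
    rw [Finset.sum_congr rfl fun j _ => this j, Finset.sum_ite_eq' Finset.univ i fun j => B k j]
    simp
  rw [Finset.sum_congr rfl fun k _ => congrArg (· ^ 2) (hs k)] at h
  rw [EuclideanSpace.norm_single, norm_one, mul_one] at h
  calc B i i ≤ |B i i| := le_abs_self _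
    _ = Real.sqrt ((B i i)^2) := (Real.sqrt_sq_eq_abs _).symm
    _ ≤ Real.sqrt (∑ k, (B k i)^2) := by
        apply Real.sqrt_le_sqrt
        exact Finset.single_le_sum (f := fun k => (B k i)^2) (fun k _ => sq_nonneg _)
          (Finset.mem_univ i)
    _ ≤ Lam := h

lemma ell_diag_ge {lam Lam : ℝ} (B : Matrix (Fin n) (Fin n) ℝ)
    (hell : ∀ ξ : Eucl n, lam * ‖ξ‖ ^ 2 ≤ (∑ i, ξ i * ∑ j, B i j * ξ j) ∧
      Real.sqrt (∑ i, (∑ j, B i j * ξ j) ^ 2) ≤ Lam * ‖ξ‖) (i : Fin n) :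
    lam ≤ B i i := by
  have h := (hell (EuclideanSpace.single i 1)).1
  rw [EuclideanSpace.norm_single, norm_one, one_pow, mul_one] at h
  have hs : (∑ k, (EuclideanSpace.single i (1:ℝ)) k * ∑ j, B k j *
      (EuclideanSpace.single i (1:ℝ)) j) = B i i := by
    have h1 : ∀ k, (EuclideanSpace.single i (1:ℝ)) k * (∑ j, B k j *
        (EuclideanSpace.single i (1:ℝ)) j) = if k = i then
          (∑ j, B k j * (EuclideanSpace.single i (1:ℝ)) j) else 0 := by
      intro k
      rw [EuclideanSpace.single_apply]
      by_cases hk : k = i <;> simp [hk]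
    rw [Finset.sum_congr rfl fun k _ => h1 k, Finset.sum_ite_eq' Finset.univ i]
    simp only [Finset.mem_univ, if_true]
    have : ∀ j, B i j * (EuclideanSpace.single i (1:ℝ)) j = if j = i then B i j else 0 := by
      intro j
      rw [EuclideanSpace.single_apply]
      by_cases hj : j = i <;> simp [hj]
    rw [Finset.sum_congr rfl fun j _ => this j, Finset.sum_ite_eq' Finset.univ i]
    simp
  rw [hs] at h
  exact h

/-- the bump is a subsolution: `∑ B_ij ∂_ij (|x-z|^{2e}) ≥ 0` for `e = -p/2`,
`p = n Λ/λ`. -/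
lemma trace_Hc_bump_nonneg {lam Lam : ℝ} (hlam : 0 < lam) (hlL : lam ≤ Lam) (hn : 1 ≤ n)
    (B : Matrix (Fin n) (Fin n) ℝ)
    (hell : ∀ ξ : Eucl n, lam * ‖ξ‖ ^ 2 ≤ (∑ i, ξ i * ∑ j, B i j * ξ j) ∧
      Real.sqrt (∑ i, (∑ j, B i j * ξ j) ^ 2) ≤ Lam * ‖ξ‖)
    (h : x ≠ z) {e : ℝ} (he : e = -((n : ℝ) * Lam / lam)/2) :
    0 ≤ ∑ i, ∑ j, B i j * Hc (bump z e) x i j := by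
  classical
  set Q := Qf z x with hQdef
  have hQ : 0 < Q := Qf_pos h
  set v : Fin n → ℝ := fun i => x i - z i with hv
  set c1 := 2*e*Q^(e-1) with hc1
  set c2 := 4*e*(e-1)*Q^(e-2) with hc2
  have hsplit : ∑ i, ∑ j, B i j * Hc (bump z e) x i j
      = c1 * (∑ i, B i i) + c2 * (∑ i, v i * ∑ j, B i j * v j) := by
    have hterm : ∀ i j, B i j * Hc (bump z e) x i j
        = (if i = j then B i j * c1 else 0) + c2 * (B i j * v i * v j) := by
      intro i j
      rw [Hc_bump h i j]
      by_cases hij : i = j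
      · subst hij
        simp [hc1, hc2, hv]
        try ring
      · simp only [if_neg hij, hc1, hc2, hv]
        ring
    rw [Finset.sum_congr rfl fun i _ => Finset.sum_congr rfl fun j _ => hterm i j]
    rw [Finset.sum_congr rfl fun i (_ : i ∈ Finset.univ) => Finset.sum_add_distrib]
    rw [Finset.sum_add_distrib]
    congr 1
    · rw [Finset.mul_sum]
      refine Finset.sum_congr rfl fun i _ => ?_
      rw [Finset.sum_ite_eq Finset.univ i fun j => B i j * c1]
      simp [mul_comm]
    · rw [Finset.mul_sum]
      refine Finset.sum_congr rfl fun i _ => ?_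
      rw [Finset.mul_sum, Finset.mul_sum]
      refine Finset.sum_congr rfl fun j _ => ?_
      ring
  rw [hsplit]
  -- bounds
  have hP : (0:ℝ) < (n : ℝ) * Lam / lam := by
    have hn' : (0:ℝ) < (n:ℝ) := by exact_mod_cast hn
    have hLam : 0 < Lam := lt_of_lt_of_le hlam hlL
    positivity
  have he0 : e < 0 := by rw [he]; linarith
  have hQe1 : (0:ℝ) < Q^(e-1) := Real.rpow_pos_of_pos hQ _
  have hQe2 : (0:ℝ) < Q^(e-2) := Real.rpow_pos_of_pos hQ _
  have hc1neg : c1 < 0 := by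
    rw [hc1]
    have : 2*e < 0 := by linarith
    exact mul_neg_of_neg_of_pos this hQe1
  have hc2pos : 0 < c2 := by
    rw [hc2]
    have h4 : 0 < 4*e*(e-1) := by
      nlinarith [mul_pos_of_neg_of_neg he0 (show e - 1 < 0 by linarith)]
    exact mul_pos h4 hQe2
  have htr : (∑ i, B i i) ≤ (n:ℝ) * Lam := by
    calc (∑ i, B i i) ≤ ∑ _i : Fin n, Lam :=
          Finset.sum_le_sum fun i _ => ell_diag_le B hell i
      _ = (n:ℝ) * Lam := by
          rw [Finset.sum_const, Finset.card_univ, Fintype.card_fin, nsmul_eq_mul]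
  have hquad : lam * Q ≤ ∑ i, v i * ∑ j, B i j * v j := by
    have h1 := (hell ((WithLp.equiv 2 (Fin n → ℝ)).symm v)).1
    have h2 : ‖(WithLp.equiv 2 (Fin n → ℝ)).symm v‖^2 = Q := by
      have hxz : (WithLp.equiv 2 (Fin n → ℝ)).symm v = x - z := by
        ext i
        simp [hv, PiLp.sub_apply]
      rw [hxz, ← Qf_eq_norm]
    rw [h2] at h1
    exact le_trans h1 (le_of_eq rfl)
  have step1 : c1 * ((n:ℝ) * Lam) ≤ c1 * (∑ i, B i i) := by
    exact mul_le_mul_of_nonpos_left htr (le_of_lt hc1neg)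
  have step2 : c2 * (lam * Q) ≤ c2 * (∑ i, v i * ∑ j, B i j * v j) :=
    mul_le_mul_of_nonneg_left hquad (le_of_lt hc2pos)
  have key : 0 ≤ c1 * ((n:ℝ) * Lam) + c2 * (lam * Q) := by
    have hQe : Q^(e-2) * Q = Q^(e-1) := by
      have h5 := Real.rpow_add_one (ne_of_gt hQ) (e-2)
      rw [show e - 2 + 1 = e - 1 by ring] at h5
      exact h5.symm
    have hPl : ((n:ℝ) * Lam / lam) * lam = (n:ℝ) * Lam := by
      field_simp
    rw [hc1, hc2]
    have expand : 2*e*Q^(e-1) * ((n:ℝ)*Lam) + 4*e*(e-1)*Q^(e-2) * (lam*Q)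
        = Q^(e-1) * (2*e*((n:ℝ)*Lam) + 4*e*(e-1)*lam) := by
      rw [← hQe]; ring
    rw [expand]
    apply mul_nonneg (le_of_lt hQe1)
    have : 2*e*((n:ℝ)*Lam) + 4*e*(e-1)*lam
        = -((n:ℝ)*Lam/lam)*((n:ℝ)*Lam) + (((n:ℝ)*Lam/lam)^2 + 2*((n:ℝ)*Lam/lam))*lam := by
      rw [he]; ring
    rw [this]
    have : -((n:ℝ)*Lam/lam)*((n:ℝ)*Lam) + (((n:ℝ)*Lam/lam)^2 + 2*((n:ℝ)*Lam/lam))*lam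
        = 2*((n:ℝ)*Lam/lam)*lam := by
      have h3 : ((n:ℝ)*Lam/lam)^2 * lam = ((n:ℝ)*Lam/lam) * ((n:ℝ)*Lam) := by
        rw [pow_two]
        calc ((n:ℝ)*Lam/lam) * ((n:ℝ)*Lam/lam) * lam
            = ((n:ℝ)*Lam/lam) * (((n:ℝ)*Lam/lam) * lam) := by ring
          _ = ((n:ℝ)*Lam/lam) * ((n:ℝ)*Lam) := by rw [hPl]
      nlinarith [h3]
    rw [this]
    positivity
  linarith

/-- the `ψ` function is a strict supersolution -/
lemma trace_Hc_psif {lam Lam : ℝ} (hlam : 0 < lam)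
    (B : Matrix (Fin n) (Fin n) ℝ)
    (hell : ∀ ξ : Eucl n, lam * ‖ξ‖ ^ 2 ≤ (∑ i, ξ i * ∑ j, B i j * ξ j) ∧
      Real.sqrt (∑ i, (∑ j, B i j * ξ j) ^ 2) ≤ Lam * ‖ξ‖)
    (i₀ : Fin n) (C : ℝ) (x : Eucl n) :
    ∑ i, ∑ j, B i j * Hc (psif i₀ C) x i j ≤ -(lam * Real.exp (x i₀)) := by
  classical
  have hterm : ∀ i j, B i j * Hc (psif i₀ C) x i j
      = if i = i₀ ∧ j = i₀ then B i₀ i₀ * (-(Real.exp (x i₀))) else 0 := by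
    intro i j
    rw [Hc_psif i₀ C x i j]
    by_cases hi : i = i₀
    · by_cases hj : j = i₀
      · rw [hi, hj]
        simp
        try ring
      · have h2 : ¬ (i₀ = j) := fun hh => hj hh.symm
        simp [hi, hj, h2]
    · have h2 : ¬ (i₀ = i) := fun hh => hi hh.symm
      simp [hi, h2]
  rw [Finset.sum_congr rfl fun i _ => Finset.sum_congr rfl fun j _ => hterm i j]
  have hcollapse : ∑ i, ∑ j, (if i = i₀ ∧ j = i₀ then B i₀ i₀ * (-(Real.exp (x i₀))) else 0)
      = B i₀ i₀ * (-(Real.exp (x i₀))) := by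
    rw [Finset.sum_comm]
    rw [Finset.sum_eq_single i₀]
    · rw [Finset.sum_eq_single i₀]
      · simp
      · intro i _ hi; simp [hi]
      · intro h; exact absurd (Finset.mem_univ i₀) h
    · intro j _ hj
      apply Finset.sum_eq_zero
      intro i _
      simp [hj]
    · intro h; exact absurd (Finset.mem_univ i₀) h
  rw [hcollapse]
  have hBl : lam ≤ B i₀ i₀ := ell_diag_ge B hell i₀
  have hexp : 0 < Real.exp (x i₀) := Real.exp_pos _
  nlinarith

end Chunk4
section Chunk5




variable {d : ℕ}


lemma ehead_sub (x y : Eucl (d+1)) : ehead (x - y) = ehead x - ehead y := by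
  ext i
  simp [ehead, PiLp.sub_apply]

lemma norm_ehead_le (v : Eucl (d+1)) : ‖ehead v‖ ≤ ‖v‖ := by
  rw [EuclideanSpace.norm_eq, EuclideanSpace.norm_eq]
  apply Real.sqrt_le_sqrt
  rw [Fin.sum_univ_castSucc (f := fun j => ‖v j‖^2)]
  have : ∑ i : Fin d, ‖ehead v i‖^2 = ∑ i : Fin d, ‖v i.castSucc‖^2 := rfl
  rw [this]
  have : (0:ℝ) ≤ ‖v (Fin.last d)‖^2 := sq_nonneg _
  linarith

lemma norm_ehead_sub_le (x y : Eucl (d+1)) : ‖ehead x - ehead y‖ ≤ ‖x - y‖ := by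
  rw [← ehead_sub]; exact norm_ehead_le _

lemma elast_sub (x y : Eucl (d+1)) : elast (x - y) = elast x - elast y := by
  simp [elast, PiLp.sub_apply]

lemma abs_elast_le (v : Eucl (d+1)) : |elast v| ≤ ‖v‖ := by
  rw [EuclideanSpace.norm_eq]
  have h1 : |elast v| = Real.sqrt (‖v (Fin.last d)‖^2) := by
    rw [Real.sqrt_sq_eq_abs]
    simp [elast]
  rw [h1]
  apply Real.sqrt_le_sqrt
  exact Finset.single_le_sum (f := fun j => ‖v j‖^2) (fun k _ => sq_nonneg _)
    (Finset.mem_univ (Fin.last d))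

lemma abs_elast_sub_le (x y : Eucl (d+1)) : |elast x - elast y| ≤ ‖x - y‖ := by
  rw [← elast_sub]; exact abs_elast_le _

lemma ehead_add_smul (x : Eucl (d+1)) (c : ℝ) : ehead (x + c • en d) = ehead x := by
  ext i
  have h1 : (x + c • en d) i.castSucc = x i.castSucc + c * (en d) i.castSucc := by
    simp [PiLp.add_apply, PiLp.smul_apply]
  have h2 : (en d) i.castSucc = 0 := by
    rw [en, EuclideanSpace.single_apply]
    simp [(Fin.castSucc_lt_last i).ne]
  show (x + c • en d) i.castSucc = x i.castSucc
  rw [h1, h2, mul_zero, add_zero]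

lemma elast_add_smul (x : Eucl (d+1)) (c : ℝ) : elast (x + c • en d) = elast x + c := by
  have h1 : (x + c • en d) (Fin.last d) = x (Fin.last d) + c * (en d) (Fin.last d) := by
    simp [PiLp.add_apply, PiLp.smul_apply]
  have h2 : (en d) (Fin.last d) = 1 := by
    rw [en, EuclideanSpace.single_apply]
    simp
  show (x + c • en d) (Fin.last d) = x (Fin.last d) + c
  rw [h1, h2, mul_one]

lemma continuous_ehead : Continuous (ehead (d := d)) := by
  have : LipschitzWith 1 (ehead (d := d)) := by
    apply LipschitzWith.of_dist_le_mul
    intro x y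
    rw [NNReal.coe_one, one_mul, dist_eq_norm, dist_eq_norm]
    exact norm_ehead_sub_le x y
  exact this.continuous

lemma continuous_elast : Continuous (elast (d := d)) := by
  have : LipschitzWith 1 (elast (d := d)) := by
    apply LipschitzWith.of_dist_le_mul
    intro x y
    rw [NNReal.coe_one, one_mul, Real.dist_eq, dist_eq_norm]
    exact abs_elast_sub_le x y
  exact this.continuous

section glip
variable {L : ℝ} {g : Eucl d → ℝ}
  (hg0 : g 0 = 0)
  (hglip : ∀ x' ∈ ball (0 : Eucl d) 1, ∀ y' ∈ ball (0 : Eucl d) 1, |g x' - g y'| ≤ L * ‖x' - y'‖)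

include hglip in
lemma g_continuousOn : ContinuousOn g (ball (0 : Eucl d) 1) := by
  have : LipschitzOnWith (Real.toNNReal L) g (ball (0 : Eucl d) 1) := by
    apply LipschitzOnWith.of_dist_le_mul
    intro x hx y hy
    rw [Real.dist_eq, dist_eq_norm]
    calc |g x - g y| ≤ L * ‖x - y‖ := hglip x hx y hy
      _ ≤ (Real.toNNReal L) * ‖x - y‖ := by
          apply mul_le_mul_of_nonneg_right (Real.le_coe_toNNReal L) (norm_nonneg _)
  exact this.continuousOn

include hg0 hglip in
lemma g_bound {u : Eucl d} (hu : u ∈ ball (0 : Eucl d) 1) : |g u| ≤ L * ‖u‖ := by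
  have := hglip u hu 0 (mem_ball_self one_pos)
  simpa [hg0] using this

include hglip in
lemma continuousOn_hG :
    ContinuousOn (hG g) {x : Eucl (d+1) | ‖ehead x‖ < 1} := by
  apply ContinuousOn.sub
  · exact continuous_elast.continuousOn
  · apply ContinuousOn.comp (g_continuousOn hglip) continuous_ehead.continuousOn
    intro x hx
    rw [mem_ball_zero_iff]
    exact hx

include hglip in
lemma isOpen_cylC {r ρ : ℝ} (hr : r ≤ 1) : IsOpen (cylC g r ρ) := by
  have hU : IsOpen {x : Eucl (d+1) | ‖ehead x‖ < r} :=
    isOpen_lt (continuous_ehead.norm) continuous_const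
  have hsub : {x : Eucl (d+1) | ‖ehead x‖ < r} ⊆ {x : Eucl (d+1) | ‖ehead x‖ < 1} :=
    fun x hx => lt_of_lt_of_le hx hr
  have hcont : ContinuousOn (hG g) {x : Eucl (d+1) | ‖ehead x‖ < r} :=
    (continuousOn_hG hglip).mono hsub
  have : cylC g r ρ = {x : Eucl (d+1) | ‖ehead x‖ < r} ∩ (hG g) ⁻¹' (Set.Ioo 0 ρ) := by
    ext x
    simp [cylC, Set.mem_Ioo, and_assoc]
  rw [this]
  exact hcont.isOpen_inter_preimage hU isOpen_Ioo

end glip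

end Chunk5
section Chunk6

lemma two_rpow_two : (2:ℝ) ^ (2:ℝ) = 4 := by
  rw [show (4:ℝ) = (2:ℝ)^(2:ℕ) by norm_num, ← Real.rpow_natCast (2:ℝ) 2]
  norm_num

lemma four_rpow (p : ℝ) : (4:ℝ)^(-p) = (2:ℝ)^((2:ℝ)*(-p)) := by
  rw [Real.rpow_mul (by norm_num : (0:ℝ) ≤ 2), two_rpow_two]

lemma pexp_pos {n : ℕ} {lam Lam : ℝ} (hn : 1 ≤ n) (hlam : 0 < lam) (hlL : lam ≤ Lam) :
    0 < pexp n lam Lam := by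
  have hn' : (0:ℝ) < (n:ℝ) := by exact_mod_cast hn
  have hLam : 0 < Lam := lt_of_lt_of_le hlam hlL
  rw [pexp]; positivity

lemma th_facts {n : ℕ} {lam Lam : ℝ} (hn : 1 ≤ n) (hlam : 0 < lam) (hlL : lam ≤ Lam) :
    0 < thconst n lam Lam ∧ thconst n lam Lam < 1 := by
  have hp := pexp_pos hn hlam hlL
  set p := pexp n lam Lam with hpdef
  have h4lt2 : (4:ℝ)^(-p) < (2:ℝ)^(-p) := by
    rw [four_rpow]
    exact Real.rpow_lt_rpow_of_exponent_lt (by norm_num) (by linarith)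
  have h2lt1 : (2:ℝ)^(-p) < 1 := Real.rpow_lt_one_of_one_lt_of_neg (by norm_num) (by linarith)
  have h4pos : (0:ℝ) < (4:ℝ)^(-p) := Real.rpow_pos_of_pos (by norm_num) _
  constructor
  · apply div_pos <;> linarith
  · rw [thconst, ← hpdef, div_lt_one (by linarith)]
    linarith

lemma Hc_combo3 {n : ℕ} {f1 f2 f3 : Eucl n → ℝ} {x : Eucl n} (c1 c2 c3 C : ℝ)
    (h1 : ContDiffAt ℝ 2 f1 x) (h2 : ContDiffAt ℝ 2 f2 x) (h3 : ContDiffAt ℝ 2 f3 x)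
    (i j : Fin n) :
    Hc (fun y => c1 * f1 y + c2 * f2 y + (c3 * f3 y + C)) x i j
      = c1 * Hc f1 x i j + c2 * Hc f2 x i j + c3 * Hc f3 x i j := by
  have hev : (fun y => fderiv ℝ (fun t => c1 * f1 t + c2 * f2 t + (c3 * f3 t + C)) y
        (EuclideanSpace.single i 1))
      =ᶠ[nhds x] (fun y => c1 * fderiv ℝ f1 y (EuclideanSpace.single i 1)
        + c2 * fderiv ℝ f2 y (EuclideanSpace.single i 1)
        + c3 * fderiv ℝ f3 y (EuclideanSpace.single i 1)) := by
    filter_upwards [eventually_diff h1, eventually_diff h2, eventually_diff h3] with y hy1 hy2 hy3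
    have e1 : fderiv ℝ (fun t => c1 * f1 t + c2 * f2 t + (c3 * f3 t + C)) y
        = c1 • fderiv ℝ f1 y + c2 • fderiv ℝ f2 y + c3 • fderiv ℝ f3 y := by
      rw [fderiv_fun_add ((hy1.const_mul c1).fun_add (hy2.const_mul c2))
          ((hy3.const_mul c3).add_const C),
        fderiv_fun_add (hy1.const_mul c1) (hy2.const_mul c2),
        fderiv_add_const, fderiv_const_mul hy1 c1, fderiv_const_mul hy2 c2,
        fderiv_const_mul hy3 c3]
    rw [e1]
    simp
  rw [Hc, hev.fderiv_eq]
  have d1 := diffAt_fderiv_apply h1 (EuclideanSpace.single i 1)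
  have d2 := diffAt_fderiv_apply h2 (EuclideanSpace.single i 1)
  have d3 := diffAt_fderiv_apply h3 (EuclideanSpace.single i 1)
  rw [fderiv_fun_add ((d1.const_mul c1).fun_add (d2.const_mul c2)) (d3.const_mul c3),
    fderiv_fun_add (d1.const_mul c1) (d2.const_mul c2), fderiv_const_mul d1 c1,
    fderiv_const_mul d2 c2, fderiv_const_mul d3 c3]
  simp [Hc]
end Chunk6
section Chunk7

lemma bump_comparison {d : ℕ} {lam Lam L : ℝ} (hlam : 0 < lam) (hlL : lam ≤ Lam) (hL : 0 ≤ L)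
    {g : Eucl d → ℝ} (hg0 : g 0 = 0)
    (hglip : ∀ x' ∈ ball (0:Eucl d) 1, ∀ y' ∈ ball (0:Eucl d) 1, |g x' - g y'| ≤ L * ‖x' - y'‖)
    {A : Eucl (d+1) → Matrix (Fin (d+1)) (Fin (d+1)) ℝ}
    (hA : UnifElliptic lam Lam (cylC g 1 1) A)
    {w : Eucl (d+1) → ℝ}
    (hw : NondivSolution A (cylC g 1 1) w) (hvG : VanishesOnGraph g 1 (cylC g 1 1) w)
    {z : Eucl (d+1)} {ρ : ℝ} (hρ : 0 < ρ) {m a : ℝ} (ha0 : 0 ≤ a) (ham : a ≤ m)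
    (hball : ∀ x ∈ closedBall z (4*ρ), ‖ehead x‖ < 1 ∧ hG g x < 1)
    (h4 : ∀ x ∈ closedBall z (4*ρ) ∩ cylC g 1 1, 0 ≤ w x + m)
    (h1 : ∀ x ∈ closedBall z ρ ∩ cylC g 1 1, a ≤ w x + m) :
    ∀ x ∈ closedBall z (2*ρ) ∩ cylC g 1 1, thconst (d+1) lam Lam * a ≤ w x + m := by
  classical
  have hd1 : 1 ≤ d + 1 := Nat.le_add_left 1 d
  have hp := pexp_pos hd1 hlam hlL
  set p := pexp (d+1) lam Lam with hpdef
  set e : ℝ := -p/2 with hedef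
  have hee : e = -((((d+1):ℕ) : ℝ) * Lam / lam)/2 := by rw [hedef, hpdef]; rfl
  set th := thconst (d+1) lam Lam with hthdef
  obtain ⟨hth0, hth1⟩ := th_facts hd1 hlam hlL
  rw [← hthdef] at hth0 hth1
  set Ω := cylC g 1 1 with hΩdef
  have hΩopen : IsOpen Ω := isOpen_cylC hglip le_rfl
  set β := bump z e with hβdef
  have hρ2 : (0:ℝ) < ρ^2 := by positivity
  set vr : ℝ := (ρ^2) ^ e with hvr
  set v2 : ℝ := ((2*ρ)^2) ^ e with hv2
  set v4 : ℝ := ((4*ρ)^2) ^ e with hv4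
  set kc : ℝ := vr - v4 with hkc
  -- rpow algebra
  have hc2 : (((2:ℝ)^(2:ℕ)):ℝ)^e = (2:ℝ)^(-p) := by
    rw [← Real.rpow_natCast (2:ℝ) 2, ← Real.rpow_mul (by norm_num : (0:ℝ) ≤ 2)]
    congr 1
    push_cast
    rw [hedef]; ring
  have hc4 : (((4:ℝ)^(2:ℕ)):ℝ)^e = (4:ℝ)^(-p) := by
    rw [← Real.rpow_natCast (4:ℝ) 2, ← Real.rpow_mul (by norm_num : (0:ℝ) ≤ 4)]
    congr 1
    push_cast
    rw [hedef]; ring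
  have hv2eq : v2 = (2:ℝ)^(-p) * vr := by
    rw [hv2, hvr, mul_pow, Real.mul_rpow (by positivity) (by positivity), hc2]
  have hv4eq : v4 = (4:ℝ)^(-p) * vr := by
    rw [hv4, hvr, mul_pow, Real.mul_rpow (by positivity) (by positivity), hc4]
  have hvrpos : 0 < vr := Real.rpow_pos_of_pos hρ2 e
  have h4lt2 : (4:ℝ)^(-p) < (2:ℝ)^(-p) := by
    rw [four_rpow]
    exact Real.rpow_lt_rpow_of_exponent_lt (by norm_num) (by linarith)
  have h2lt1 : (2:ℝ)^(-p) < 1 := Real.rpow_lt_one_of_one_lt_of_neg (by norm_num) (by linarith)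
  have h4pos : (0:ℝ) < (4:ℝ)^(-p) := Real.rpow_pos_of_pos (by norm_num) _
  have hv4pos : 0 < v4 := by rw [hv4eq]; positivity
  have hkcpos : 0 < kc := by
    rw [hkc, hv4eq]
    have h30 : 0 < (1 - (4:ℝ)^(-p)) * vr := mul_pos (by linarith) hvrpos
    linarith
  have hden : (1:ℝ) - (4:ℝ)^(-p) ≠ 0 := ne_of_gt (by linarith)
  have hthkc : th * kc = v2 - v4 := by
    rw [hthdef, thconst, ← hpdef, hkc, hv2eq, hv4eq]
    field_simp
  -- ψ facts
  have helast_le : ∀ x ∈ closedBall z (4*ρ), elast x ≤ L + 1 := by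
    intro x hx
    obtain ⟨hhead, hhG⟩ := hball x hx
    have hgb : |g (ehead x)| ≤ L * ‖ehead x‖ := g_bound hg0 hglip (mem_ball_zero_iff.mpr hhead)
    have helast : elast x = hG g x + g (ehead x) := by rw [hG]; ring
    have hL1 : L * ‖ehead x‖ ≤ L := by
      calc L * ‖ehead x‖ ≤ L * 1 := mul_le_mul_of_nonneg_left hhead.le hL
        _ = L := mul_one L
    rw [helast]
    have habs := abs_le.mp hgb
    linarith [habs.2]
  have hψ0 : ∀ x ∈ closedBall z (4*ρ), 0 ≤ psif (Fin.last d) (Real.exp (L+1)) x := by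
    intro x hx
    have h := helast_le x hx
    have hexp : Real.exp (x (Fin.last d)) ≤ Real.exp (L+1) := Real.exp_le_exp.mpr h
    rw [psif]
    linarith
  -- the comparison domain
  set D : Set (Eucl (d+1)) := {y | y ∈ Ω ∧ dist y z < 4*ρ ∧ ρ < dist y z} with hD
  have hDopen : IsOpen D := by
    have ho1 : IsOpen {y : Eucl (d+1) | dist y z < 4*ρ} :=
      isOpen_lt (continuous_id.dist continuous_const) continuous_const
    have ho2 : IsOpen {y : Eucl (d+1) | ρ < dist y z} :=
      isOpen_lt continuous_const (continuous_id.dist continuous_const)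
    have heq : D = Ω ∩ ({y : Eucl (d+1) | dist y z < 4*ρ} ∩ {y | ρ < dist y z}) := by
      ext y
      simp only [hD, Set.mem_setOf_eq, Set.mem_inter_iff, and_assoc]
    rw [heq]
    exact hΩopen.inter (ho1.inter ho2)
  have hDsub4 : D ⊆ closedBall z (4*ρ) := fun y hy => mem_closedBall.mpr hy.2.1.le
  have hQdist : ∀ y : Eucl (d+1), Qf z y = (dist y z)^2 := by
    intro y; rw [Qf_eq_norm, dist_eq_norm]
  have hβle : ∀ y : Eucl (d+1), ρ ≤ dist y z → β y ≤ vr := by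
    intro y hy
    rw [hβdef, bump, hQdist, hvr]
    exact Real.rpow_le_rpow_of_nonpos hρ2
      (by exact pow_le_pow_left₀ hρ.le hy 2) (by rw [hedef]; linarith)
  have hβge2 : ∀ y : Eucl (d+1), 0 < dist y z → dist y z ≤ 2*ρ → v2 ≤ β y := by
    intro y hy0 hy
    rw [hβdef, bump, hQdist, hv2]
    exact Real.rpow_le_rpow_of_nonpos (by positivity)
      (by exact pow_le_pow_left₀ dist_nonneg hy 2) (by rw [hedef]; linarith)
  -- step A : for all positive ε
  have stepA : ∀ ε : ℝ, 0 < ε → ∀ x ∈ D,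
      0 ≤ kc * (w x + m) - a * (β x - v4)
        + ε * psif (Fin.last d) (Real.exp (L+1)) x := by
    intro ε hε
    by_contra hcon
    push_neg at hcon
    obtain ⟨xh, hxhD, hxhneg⟩ := hcon
    set ψ := psif (Fin.last d) (Real.exp (L+1)) with hψdef
    set V : Eucl (d+1) → ℝ :=
      fun y => kc * w y + (-a) * β y + (ε * ψ y + (kc*m + a*v4)) with hV
    have hVeq : ∀ y, V y = kc * (w y + m) - a * (β y - v4) + ε * ψ y := by
      intro y; rw [hV]; ring
    have hVlb : ∀ y ∈ D, -(a*vr) ≤ V y := by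
      intro y hy
      have hwm : 0 ≤ w y + m := h4 y ⟨hDsub4 hy, hy.1⟩
      have hβy : β y ≤ vr := hβle y hy.2.2.le
      have hψy : 0 ≤ ψ y := hψ0 y (hDsub4 hy)
      rw [hVeq]
      linarith [mul_nonneg hkcpos.le hwm, mul_nonneg hε.le hψy,
        mul_le_mul_of_nonneg_left hβy ha0, mul_nonneg ha0 hv4pos.le]
    have hSne : (V '' D).Nonempty := ⟨V xh, Set.mem_image_of_mem V hxhD⟩
    have hSbdd : BddBelow (V '' D) := by
      refine ⟨-(a*vr), ?_⟩
      rintro s ⟨y, hy, rfl⟩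
      exact hVlb y hy
    set I := sInf (V '' D) with hIdef
    have hIneg : I < 0 := by
      have h5 := csInf_le hSbdd (Set.mem_image_of_mem V hxhD)
      have h6 : V xh < 0 := by rw [hVeq]; exact hxhneg
      linarith
    have hseq : ∀ k : ℕ, ∃ y, y ∈ D ∧ V y < I + 1/((k:ℝ)+1) := by
      intro k
      obtain ⟨s, hs, hlt⟩ := Real.lt_sInf_add_pos hSne
        (by positivity : (0:ℝ) < 1/((k:ℝ)+1))
      obtain ⟨y, hy, rfl⟩ := hs
      exact ⟨y, hy, hlt⟩
    choose u huD huV using hseq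
    have huI : ∀ k, I ≤ V (u k) := fun k =>
      csInf_le hSbdd (Set.mem_image_of_mem V (huD k))
    have hVtend : Tendsto (fun k => V (u k)) atTop (nhds I) := by
      have hupper : Tendsto (fun k : ℕ => I + 1/((k:ℝ)+1)) atTop (nhds I) := by
        have h7 := tendsto_one_div_add_atTop_nhds_zero_nat (𝕜 := ℝ)
        have h8 : Tendsto (fun k : ℕ => I + 1/((k:ℝ)+1)) atTop (nhds (I + 0)) :=
          Tendsto.add tendsto_const_nhds h7
        simpa using h8
      exact tendsto_of_tendsto_of_tendsto_of_le_of_le tendsto_const_nhds hupper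
        huI (fun k => (huV k).le)
    have hcomp : IsCompact (closure D) :=
      (isCompact_closedBall z (4*ρ)).of_isClosed_subset isClosed_closure
        (closure_minimal hDsub4 isClosed_closedBall)
    obtain ⟨xb, hxbcl, φs, hφmono, hφtend⟩ :=
      hcomp.tendsto_subseq (fun k => subset_closure (huD k))
    have hVtend2 : Tendsto (fun k => V (u (φs k))) atTop (nhds I) :=
      hVtend.comp hφmono.tendsto_atTop
    have hxball : xb ∈ closedBall z (4*ρ) := closure_minimal hDsub4 isClosed_closedBall hxbcl
    have hdistge : ρ ≤ dist xb z := by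
      have hdtend : Tendsto (fun k => dist (u (φs k)) z) atTop (nhds (dist xb z)) :=
        hφtend.dist tendsto_const_nhds
      exact ge_of_tendsto hdtend (Eventually.of_forall fun k => (huD (φs k)).2.2.le)
    have hxbnez : xb ≠ z := by
      intro hcontra
      rw [hcontra, dist_self] at hdistge
      linarith
    have hβcont : ContinuousAt β xb := (contDiffAt_bump hxbnez).continuousAt
    have hψcont : ContinuousAt ψ xb := (contDiffAt_psif (Fin.last d) _ xb).continuousAt
    by_cases hxbΩ : xb ∈ Ω
    · have hwcont : ContinuousAt w xb :=
        (hw.1.continuousOn.continuousAt (hΩopen.mem_nhds hxbΩ))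
      have hVcont : ContinuousAt V xb := by
        rw [hV]
        exact ((continuousAt_const.mul hwcont).add (continuousAt_const.mul hβcont)).add
          ((continuousAt_const.mul hψcont).add continuousAt_const)
      have hVxb : V xb = I := tendsto_nhds_unique (hVcont.tendsto.comp hφtend) hVtend2
      by_cases hxbD : xb ∈ D
      · -- interior minimum: PDE contradiction
        have hmin : IsLocalMin V xb := by
          have hnb : ∀ᶠ y in nhds xb, y ∈ D := hDopen.mem_nhds hxbD
          refine hnb.mono fun y hy => ?_
          rw [hVxb]
          exact csInf_le hSbdd (Set.mem_image_of_mem V hy)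
        have hwcd : ContDiffAt ℝ 2 w xb := hw.1.contDiffAt (hΩopen.mem_nhds hxbΩ)
        have hβcd : ContDiffAt ℝ 2 β xb := contDiffAt_bump hxbnez
        have hψcd : ContDiffAt ℝ 2 ψ xb := contDiffAt_psif _ _ _
        have hVcd : ContDiffAt ℝ 2 V xb := by
          rw [hV]
          exact ((contDiffAt_const.mul hwcd).add (contDiffAt_const.mul hβcd)).add
            ((contDiffAt_const.mul hψcd).add contDiffAt_const)
        have hHsym : ∀ i j, Hc V xb i j = Hc V xb j i := fun i j => Hc_symm hVcd i j
        have hHpsd := isLocalMin_Hc_quad_nonneg hVcd hmin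
        have htr : 0 ≤ ∑ i, ∑ j, A xb i j * Hc V xb i j :=
          trace_prod_nonneg hlam.le (A xb) (fun ξ => (hA xb hxbΩ ξ).1) _ hHsym hHpsd
        have hHcV : ∀ i j, Hc V xb i j
            = kc * Hc w xb i j + (-a) * Hc β xb i j + ε * Hc ψ xb i j := by
          intro i j
          rw [hV]
          exact Hc_combo3 kc (-a) ε _ hwcd hβcd hψcd i j
        have hPDE : ∑ i, ∑ j, A xb i j * Hc w xb i j = 0 := hw.2 xb hxbΩ
        have hTβ : 0 ≤ ∑ i, ∑ j, A xb i j * Hc β xb i j := by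
          rw [hβdef]
          exact trace_Hc_bump_nonneg hlam hlL hd1 (A xb)
            (fun ξ => hA xb hxbΩ ξ) hxbnez hee
        have hTψ : ∑ i, ∑ j, A xb i j * Hc ψ xb i j
            ≤ -(lam * Real.exp (xb (Fin.last d))) := by
          rw [hψdef]
          exact trace_Hc_psif hlam (A xb) (fun ξ => hA xb hxbΩ ξ) _ _ xb
        have hsum : ∑ i, ∑ j, A xb i j * Hc V xb i j
            = kc * (∑ i, ∑ j, A xb i j * Hc w xb i j)
              + (-a) * (∑ i, ∑ j, A xb i j * Hc β xb i j)
              + ε * (∑ i, ∑ j, A xb i j * Hc ψ xb i j) := by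
          rw [Finset.mul_sum, Finset.mul_sum, Finset.mul_sum,
            ← Finset.sum_add_distrib, ← Finset.sum_add_distrib]
          refine Finset.sum_congr rfl fun i _ => ?_
          rw [Finset.mul_sum, Finset.mul_sum, Finset.mul_sum,
            ← Finset.sum_add_distrib, ← Finset.sum_add_distrib]
          refine Finset.sum_congr rfl fun j _ => ?_
          rw [hHcV i j]; ring
        have hexp : 0 < Real.exp (xb (Fin.last d)) := Real.exp_pos _
        rw [hsum, hPDE] at htr
        have hb1 : 0 ≤ a * (∑ i, ∑ j, A xb i j * Hc β xb i j) := mul_nonneg ha0 hTβ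
        have hb2 : ε * (∑ i, ∑ j, A xb i j * Hc ψ xb i j)
            ≤ ε * (-(lam * Real.exp (xb (Fin.last d)))) :=
          mul_le_mul_of_nonneg_left hTψ hε.le
        have hb3 : 0 < ε * (lam * Real.exp (xb (Fin.last d))) :=
          mul_pos hε (mul_pos hlam hexp)
        linarith
      · -- on one of the two spheres
        have hd4 : dist xb z ≤ 4*ρ := mem_closedBall.mp hxball
        have hcases : dist xb z = ρ ∨ dist xb z = 4*ρ := by
          by_contra hno
          push_neg at hno
          exact hxbD ⟨hxbΩ, lt_of_le_of_ne hd4 hno.2,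
            lt_of_le_of_ne hdistge (Ne.symm hno.1)⟩
        have hwmxb : 0 ≤ w xb + m := h4 xb ⟨hxball, hxbΩ⟩
        have hψxb : 0 ≤ ψ xb := hψ0 xb hxball
        have hVxbge : 0 ≤ V xb := by
          rcases hcases with hr | hr
          · have hβv : β xb = vr := by rw [hβdef, bump, hQdist xb, hr, hvr]
            have hwma : a ≤ w xb + m := h1 xb ⟨mem_closedBall.mpr hr.le, hxbΩ⟩
            rw [hVeq, hβv]
            have hvk : vr - v4 = kc := by rw [hkc]
            rw [hvk]
            linarith [mul_le_mul_of_nonneg_left hwma hkcpos.le,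
              mul_nonneg hε.le hψxb]
          · have hβv : β xb = v4 := by rw [hβdef, bump, hQdist xb, hr, hv4]
            rw [hVeq, hβv]
            linarith [mul_nonneg hkcpos.le hwmxb, mul_nonneg hε.le hψxb]
        rw [hVxb] at hVxbge
        linarith
    · -- xb lies on the graph: use the vanishing boundary condition
      obtain ⟨hxhead, hxhG1⟩ := hball xb hxball
      have hUopen : IsOpen {y : Eucl (d+1) | ‖ehead y‖ < 1} :=
        isOpen_lt (continuous_ehead.norm) continuous_const
      have hGcont : ContinuousAt (hG g) xb :=
        (continuousOn_hG hglip).continuousAt (hUopen.mem_nhds hxhead)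
      have hGtend : Tendsto (fun k => hG g (u (φs k))) atTop (nhds (hG g xb)) :=
        hGcont.tendsto.comp hφtend
      have hG0le : 0 ≤ hG g xb :=
        ge_of_tendsto hGtend (Eventually.of_forall fun k => ((huD (φs k)).1).2.1.le)
      have hGeq : hG g xb = 0 := by
        by_contra hne
        have hpos : 0 < hG g xb := lt_of_le_of_ne hG0le (Ne.symm hne)
        exact hxbΩ ⟨hxhead, hpos, hxhG1⟩
      have hlasteq : elast xb = g (ehead xb) := by
        have h9 : elast xb - g (ehead xb) = 0 := hGeq
        linarith
      have hwtend : Tendsto (fun k => w (u (φs k))) atTop (nhds 0) := by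
        have h0 := hvG xb hxhead hlasteq
        refine h0.comp ?_
        rw [tendsto_nhdsWithin_iff]
        exact ⟨hφtend, Eventually.of_forall fun k => (huD (φs k)).1⟩
      have hVtend3 : Tendsto (fun k => V (u (φs k))) atTop
          (nhds (kc * 0 + (-a) * β xb + (ε * ψ xb + (kc*m + a*v4)))) := by
        rw [hV]
        exact ((tendsto_const_nhds.mul hwtend).add
          (tendsto_const_nhds.mul (hβcont.tendsto.comp hφtend))).add
          ((tendsto_const_nhds.mul (hψcont.tendsto.comp hφtend)).add tendsto_const_nhds)
      have hIeq : I = kc * 0 + (-a) * β xb + (ε * ψ xb + (kc*m + a*v4)) :=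
        tendsto_nhds_unique hVtend2 hVtend3
      have hβxb : β xb ≤ vr := hβle xb hdistge
      have hψxb : 0 ≤ ψ xb := hψ0 xb hxball
      have hge0 : 0 ≤ kc * 0 + (-a) * β xb + (ε * ψ xb + (kc*m + a*v4)) := by
        have h31 : a * (β xb - v4) ≤ a * kc := by
          apply mul_le_mul_of_nonneg_left _ ha0
          rw [hkc]; linarith
        have h32 : 0 ≤ kc * (m - a) := mul_nonneg hkcpos.le (by linarith)
        have h33 : 0 ≤ ε * ψ xb := mul_nonneg hε.le hψxb
        have h34 : kc * (m - a) = kc * m - a * kc := by ring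
        linarith
      rw [← hIeq] at hge0
      linarith
  -- step B: let ε → 0
  have claim : ∀ x ∈ D, 0 ≤ kc * (w x + m) - a * (β x - v4) := by
    intro x hx
    by_contra hcon
    push_neg at hcon
    set E := kc * (w x + m) - a * (β x - v4) with hEdef
    have hψx : 0 ≤ psif (Fin.last d) (Real.exp (L+1)) x := hψ0 x (hDsub4 hx)
    set ψx := psif (Fin.last d) (Real.exp (L+1)) x with hψxdef
    have hεpos : 0 < (-E)/(ψx + 1) := by
      apply div_pos (by linarith) (by linarith)
    have hA2 := stepA _ hεpos x hx
    rw [← hEdef, ← hψxdef] at hA2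
    have hfrac : ((-E)/(ψx + 1)) * ψx < -E := by
      rw [div_mul_eq_mul_div, div_lt_iff₀ (by linarith)]
      have h35 : (-E) * (ψx + 1) = -E * ψx + (-E) := by ring
      linarith
    linarith
  -- conclusion
  intro x hx
  obtain ⟨hx2, hxΩ⟩ := hx
  by_cases hdist : dist x z ≤ ρ
  · have ha := h1 x ⟨mem_closedBall.mpr hdist, hxΩ⟩
    have : th * a ≤ 1 * a := mul_le_mul_of_nonneg_right hth1.le ha0
    linarith
  · push_neg at hdist
    have hxD : x ∈ D := ⟨hxΩ, lt_of_le_of_lt (mem_closedBall.mp hx2) (by linarith), hdist⟩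
    have hcl := claim x hxD
    have hβx : v2 ≤ β x := hβge2 x (lt_trans hρ hdist) (mem_closedBall.mp hx2)
    have h7 : a * (v2 - v4) ≤ a * (β x - v4) :=
      mul_le_mul_of_nonneg_left (by linarith) ha0
    have h8 : th * a * kc ≤ (w x + m) * kc := by
      calc th * a * kc = a * (v2 - v4) := by rw [← hthkc]; ring
        _ ≤ a * (β x - v4) := h7
        _ ≤ kc * (w x + m) := by linarith
        _ = (w x + m) * kc := mul_comm _ _
    exact le_of_mul_le_mul_right h8 hkcpos
end Chunk7
section Chunk8

def Nc (L : ℝ) : ℕ := ⌈10*(1+L)⌉₊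

lemma chain_step {d : ℕ} {lam Lam L : ℝ} (hlam : 0 < lam) (hlL : lam ≤ Lam) (hL : 0 ≤ L)
    {g : Eucl d → ℝ} (hg0 : g 0 = 0)
    (hglip : ∀ x' ∈ ball (0:Eucl d) 1, ∀ y' ∈ ball (0:Eucl d) 1, |g x' - g y'| ≤ L * ‖x' - y'‖)
    {A : Eucl (d+1) → Matrix (Fin (d+1)) (Fin (d+1)) ℝ}
    (hA : UnifElliptic lam Lam (cylC g 1 1) A)
    {w : Eucl (d+1) → ℝ}
    (hw : NondivSolution A (cylC g 1 1) w) (hvG : VanishesOnGraph g 1 (cylC g 1 1) w)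
    {δ : ℝ} (hδ : 0 < δ) (hδ4 : δ ≤ 1/4)
    (hpos : ∀ x ∈ cylC g 1 1 \ cylC g 1 δ, 0 ≤ w x)
    {r : ℝ} (hr : r ≤ 1) {m : ℝ} (hm : 0 ≤ m)
    (hslab : ∀ x ∈ cylC g r δ, 0 ≤ w x + m)
    {x₀ : Eucl (d+1)} (hx₀ : x₀ ∈ cylC g (r - δ) δ) :
    (thconst (d+1) lam Lam) ^ (Nc L) * m ≤ w x₀ + m := by
  have hd1 : 1 ≤ d + 1 := Nat.le_add_left 1 d
  obtain ⟨hth0, hth1⟩ := th_facts hd1 hlam hlL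
  set th := thconst (d+1) lam Lam with hthdef
  obtain ⟨hx₀head, hx₀pos, hx₀δ⟩ := hx₀
  have h1L : (0:ℝ) < 1 + L := by linarith
  set ρ : ℝ := δ/(8*(1+L)) with hρdef
  have hρ : 0 < ρ := div_pos hδ (by linarith)
  have hρδ : 8*(1+L)*ρ = δ := by rw [hρdef]; field_simp
  have hLρ : 0 ≤ L * ρ := mul_nonneg hL hρ.le
  have h4ρ : 4*ρ ≤ δ/2 := by nlinarith
  set T : ℝ := δ + 2*(1+L)*ρ with hT
  have hTval : T = δ + δ/4 := by
    rw [hT]; nlinarith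
  have hTpos : 0 < T := by rw [hTval]; linarith
  set cj : ℕ → ℝ := fun j => max (T - j*ρ) 0 with hcj
  set zc : ℕ → Eucl (d+1) := fun j => x₀ + (cj j) • en d with hzc
  have hcjval : ∀ j : ℕ, cj j = max (T - j*ρ) 0 := fun j => by rw [hcj]
  have hzcval : ∀ j : ℕ, zc j = x₀ + (cj j) • en d := fun j => by rw [hzc]
  have hcj0 : ∀ j, 0 ≤ cj j := fun j => by rw [hcjval]; exact le_max_right _ _
  have hcjT : ∀ j, cj j ≤ T := by
    intro j
    rw [hcjval]
    apply max_le _ hTpos.le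
    have : 0 ≤ (j:ℝ)*ρ := mul_nonneg (Nat.cast_nonneg j) hρ.le
    linarith
  -- geometry of the chain balls
  have hgeom : ∀ j : ℕ, ∀ s : ℝ, 0 ≤ s → s ≤ 4*ρ → ∀ x ∈ closedBall (zc j) s,
      ‖ehead x‖ < 1 ∧ ‖ehead x‖ < r - δ/2 ∧
      |hG g x - (hG g x₀ + cj j)| ≤ (1+L)*s := by
    intro j s hs0 hs4 x hx
    have hdist : ‖x - zc j‖ ≤ s := by rw [← dist_eq_norm]; exact mem_closedBall.mp hx
    have hheadz : ehead (zc j) = ehead x₀ := by rw [hzcval]; exact ehead_add_smul x₀ (cj j)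
    have hlastz : elast (zc j) = elast x₀ + cj j := by
      rw [hzcval]; exact elast_add_smul x₀ (cj j)
    have hhead1 : ‖ehead x - ehead x₀‖ ≤ s := by
      rw [← hheadz]
      exact le_trans (norm_ehead_sub_le x (zc j)) hdist
    have hheadb : ‖ehead x‖ ≤ ‖ehead x₀‖ + s := by
      calc ‖ehead x‖ = ‖ehead x₀ + (ehead x - ehead x₀)‖ := by rw [add_sub_cancel]
        _ ≤ ‖ehead x₀‖ + ‖ehead x - ehead x₀‖ := norm_add_le _ _
        _ ≤ ‖ehead x₀‖ + s := by linarith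
    have hsδ : s ≤ δ/2 := le_trans hs4 h4ρ
    have hrle : ‖ehead x‖ < r - δ/2 := by linarith
    have hx1 : ‖ehead x‖ < 1 := by linarith
    have hgd : |g (ehead x) - g (ehead x₀)| ≤ L * s := by
      have hball1 : ehead x ∈ ball (0:Eucl d) 1 := mem_ball_zero_iff.mpr hx1
      have hball2 : ehead x₀ ∈ ball (0:Eucl d) 1 := mem_ball_zero_iff.mpr (by linarith)
      calc |g (ehead x) - g (ehead x₀)| ≤ L * ‖ehead x - ehead x₀‖ :=
            hglip _ hball1 _ hball2
        _ ≤ L * s := mul_le_mul_of_nonneg_left hhead1 hL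
    have hlastd : |elast x - elast (zc j)| ≤ s := le_trans (abs_elast_sub_le _ _) hdist
    have heq : hG g x - (hG g x₀ + cj j)
        = (elast x - elast (zc j)) - (g (ehead x) - g (ehead x₀)) := by
      rw [hG, hG, hlastz]; ring
    refine ⟨hx1, hrle, ?_⟩
    rw [heq]
    calc |(elast x - elast (zc j)) - (g (ehead x) - g (ehead x₀))|
        ≤ |elast x - elast (zc j)| + |g (ehead x) - g (ehead x₀)| := abs_sub _ _
      _ ≤ s + L * s := add_le_add hlastd hgd
      _ = (1+L)*s := by ring
  have h4L : (1+L)*(4*ρ) = δ/2 := by nlinarith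
  have hballmem : ∀ j, ∀ x ∈ closedBall (zc j) (4*ρ), ‖ehead x‖ < 1 ∧ hG g x < 1 := by
    intro j x hx
    obtain ⟨h1', h2', h3'⟩ := hgeom j (4*ρ) (by positivity) le_rfl x hx
    have habs := abs_le.mp h3'
    refine ⟨h1', ?_⟩
    have := hcjT j
    rw [h4L] at habs
    -- hG x ≤ h₀ + T + δ/2 ≤ δ + (δ + δ/4) + δ/2 = (11/4)δ ≤ 11/16 < 1
    linarith [hTval, habs.2]
  -- the invariant along the chain
  have hinv : ∀ j : ℕ, ∀ x ∈ closedBall (zc j) ρ ∩ cylC g 1 1, th^j * m ≤ w x + m := by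
    intro j
    induction j with
    | zero =>
      intro x hx
      obtain ⟨hxb, hxΩ⟩ := hx
      obtain ⟨h1', h2', h3'⟩ := hgeom 0 ρ hρ.le (by linarith) x hxb
      have hc0 : cj 0 = T := by
        rw [hcjval]
        simp [hTpos.le]
      rw [hc0] at h3'
      have habs := abs_le.mp h3'
      have h8 : (1+L)*ρ ≤ δ/2 := by nlinarith
      have hδle : δ ≤ hG g x := by linarith [hTval, habs.1, hx₀pos]
      have hw0 : 0 ≤ w x := hpos x ⟨hxΩ, fun hmem => absurd hmem.2.2 (not_lt.mpr hδle)⟩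
      rw [pow_zero, one_mul]
      linarith
    | succ j ih =>
      intro x hx
      obtain ⟨hxb, hxΩ⟩ := hx
      have haj0 : 0 ≤ th^j * m := mul_nonneg (pow_nonneg hth0.le j) hm
      have hajm : th^j * m ≤ m := by
        have hp1 : th^j ≤ 1 := pow_le_one₀ hth0.le hth1.le
        calc th^j * m ≤ 1 * m := mul_le_mul_of_nonneg_right hp1 hm
          _ = m := one_mul m
      have hstep := bump_comparison hlam hlL hL hg0 hglip hA hw hvG hρ haj0 hajm
        (hballmem j)
        (by
          intro y hy
          obtain ⟨hyb, hyΩ⟩ := hy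
          obtain ⟨h1', h2', h3'⟩ := hgeom j (4*ρ) (by positivity) le_rfl y hyb
          by_cases hyδ : hG g y < δ
          · exact hslab y ⟨by linarith, hyΩ.2.1, hyδ⟩
          · push_neg at hyδ
            have hw0 := hpos y ⟨hyΩ, fun hmem => absurd hmem.2.2 (not_lt.mpr hyδ)⟩
            linarith)
        ih
      have hxb2 : x ∈ closedBall (zc j) (2*ρ) := by
        have hd1' : dist x (zc (j+1)) ≤ ρ := mem_closedBall.mp hxb
        have hzz : dist (zc (j+1)) (zc j) ≤ ρ := by
          rw [dist_eq_norm]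
          have hzsub : zc (j+1) - zc j = (cj (j+1) - cj j) • en d := by
            rw [hzcval, hzcval, sub_smul]
            abel
          rw [hzsub, norm_smul]
          have hen : ‖en d‖ = 1 := by
            rw [en, EuclideanSpace.norm_single]
            norm_num
          rw [hen, mul_one]
          have hmax := abs_max_sub_max_le_abs (T - ((j:ℝ)+1)*ρ) (T - (j:ℝ)*ρ) 0
          have heq2 : |(T - ((j:ℝ)+1)*ρ) - (T - (j:ℝ)*ρ)| = ρ := by
            rw [show (T - ((j:ℝ)+1)*ρ) - (T - (j:ℝ)*ρ) = -ρ by ring, abs_neg,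
              abs_of_pos hρ]
          rw [heq2] at hmax
          calc |cj (j+1) - cj j| = |max (T - ((j:ℝ)+1)*ρ) 0 - max (T - (j:ℝ)*ρ) 0| := by
                rw [hcjval, hcjval]
                push_cast
                ring_nf
            _ ≤ ρ := hmax
        calc dist x (zc j) ≤ dist x (zc (j+1)) + dist (zc (j+1)) (zc j) :=
              dist_triangle _ _ _
          _ ≤ ρ + ρ := add_le_add hd1' hzz
          _ = 2*ρ := by ring
      have hfin := hstep x ⟨hxb2, hxΩ⟩
      rw [← hthdef] at hfin
      calc th^(j+1) * m = th * (th^j * m) := by ring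
        _ ≤ w x + m := hfin
  -- conclude at the end of the chain
  have hzN : zc (Nc L) = x₀ := by
    have hcN : cj (Nc L) = 0 := by
      rw [hcjval]
      apply max_eq_right
      have hN := Nat.le_ceil (10*(1+L))
      have h10 : 10*(1+L)*ρ = δ + δ/4 := by nlinarith
      have hNρ : 10*(1+L)*ρ ≤ (Nc L : ℝ)*ρ := by
        apply mul_le_mul_of_nonneg_right _ hρ.le
        exact_mod_cast hN
      linarith [hTval]
    rw [hzcval, hcN]
    simp
  have hx₀Ω : x₀ ∈ cylC g 1 1 := ⟨by linarith, hx₀pos, by linarith⟩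
  have hfin := hinv (Nc L) x₀ ⟨by rw [hzN]; exact mem_closedBall_self hρ.le, hx₀Ω⟩
  exact hfin
end Chunk8
section Chunk9

/-- **Geometric decay of the negative part near a Lipschitz graph** (inequality (2.4)
in Step 1): there is a universal constant `c₀ ∈ (0,1)` such that for every
`δ ∈ (0, 1/4]`, if `w` solves `tr(A D²w) = 0` in `C_1`, vanishes continuously on `Γ`,
`w ≥ -1` on `C_1` and `w ≥ 0` on `C_1 \ C(1,δ)`, then `w ≥ -(1-c₀)^k` on `C_{1-kδ}`
for every positive integer `k` with `kδ ≤ 1/2`; in particular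
`w ≥ -(1-c₀)^⌊1/(4δ)⌋` on `C_{1/2}`. -/
theorem geometric_decay_negative_part (d : ℕ) (hd : 1 ≤ d) (lam Lam L : ℝ)
    (hlam : 0 < lam) (hlL : lam ≤ Lam) (hL : 0 < L) :
    ∃ c₀ : ℝ, 0 < c₀ ∧ c₀ < 1 ∧
      ∀ δ : ℝ, 0 < δ → δ ≤ 1 / 4 →
      ∀ g : Eucl d → ℝ, g 0 = 0 →
        (∀ x' ∈ ball (0 : Eucl d) 1, ∀ y' ∈ ball (0 : Eucl d) 1,
          |g x' - g y'| ≤ L * ‖x' - y'‖) →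
        ∀ A : Eucl (d + 1) → Matrix (Fin (d + 1)) (Fin (d + 1)) ℝ,
          UnifElliptic lam Lam (cylC g 1 1) A →
          ∀ w : Eucl (d + 1) → ℝ,
            NondivSolution A (cylC g 1 1) w → VanishesOnGraph g 1 (cylC g 1 1) w →
            (∀ x ∈ cylC g 1 1, -1 ≤ w x) →
            (∀ x ∈ cylC g 1 1 \ cylC g 1 δ, 0 ≤ w x) →
            (∀ k : ℕ, 1 ≤ k → (k : ℝ) * δ ≤ 1 / 2 →
              ∀ x ∈ cylC g (1 - k * δ) (1 - k * δ), -(1 - c₀) ^ k ≤ w x) ∧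
            (∀ x ∈ cylC g (1 / 2) (1 / 2),
              -(1 - c₀) ^ (⌊1 / (4 * δ)⌋₊) ≤ w x) := by
  have hd1 : 1 ≤ d + 1 := Nat.le_add_left 1 d
  obtain ⟨hth0, hth1⟩ := th_facts hd1 hlam hlL
  set c₀ := thconst (d+1) lam Lam ^ (Nc L) with hc₀
  have hc₀pos : 0 < c₀ := pow_pos hth0 _
  have hNne : Nc L ≠ 0 := by
    have : 0 < Nc L := Nat.ceil_pos.mpr (by linarith)
    omega
  have hc₀lt1 : c₀ < 1 := pow_lt_one₀ hth0.le hth1 hNne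
  refine ⟨c₀, hc₀pos, hc₀lt1, ?_⟩
  intro δ hδ hδ4 g hg0 hglip A hA w hw hvG hneg1 hpos
  have hkey : ∀ k : ℕ, ∀ x ∈ cylC g (1 - k*δ) δ, 0 ≤ w x + (1 - c₀)^k := by
    intro k
    induction k with
    | zero =>
      intro x hx
      have hx1 : x ∈ cylC g 1 1 := by
        refine ⟨?_, hx.2.1, lt_of_lt_of_le hx.2.2 (by linarith)⟩
        have h0 := hx.1
        simpa using h0
      have := hneg1 x hx1
      simp only [pow_zero]
      linarith
    | succ k ih =>
      intro x hx
      have h1c : 0 ≤ 1 - c₀ := by linarith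
      have hm : 0 ≤ (1-c₀)^k := pow_nonneg h1c k
      have hr : (1:ℝ) - k*δ ≤ 1 := by
        have : 0 ≤ (k:ℝ)*δ := mul_nonneg (Nat.cast_nonneg k) hδ.le
        linarith
      have hx' : x ∈ cylC g ((1 - k*δ) - δ) δ := by
        obtain ⟨h1, h2, h3⟩ := hx
        refine ⟨?_, h2, h3⟩
        push_cast at h1
        linarith
      have hchain := chain_step hlam hlL hL.le hg0 hglip hA hw hvG hδ hδ4 hpos hr hm ih hx'
      rw [← hc₀] at hchain
      have hps : (1-c₀)^(k+1) = (1-c₀)^k - c₀*(1-c₀)^k := by ring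
      rw [hps]
      linarith
  constructor
  · intro k hk1 hkδ x hx
    obtain ⟨h1, h2, h3⟩ := hx
    have hkδ0 : 0 ≤ (k:ℝ)*δ := mul_nonneg (Nat.cast_nonneg k) hδ.le
    have hpow : 0 ≤ (1-c₀)^k := pow_nonneg (by linarith) k
    by_cases hxh : hG g x < δ
    · have := hkey k x ⟨h1, h2, hxh⟩
      linarith
    · push_neg at hxh
      have hxΩ : x ∈ cylC g 1 1 :=
        ⟨lt_of_lt_of_le h1 (by linarith), h2, lt_of_lt_of_le h3 (by linarith)⟩
      have hw0 := hpos x ⟨hxΩ, fun hmem => absurd hmem.2.2 (not_lt.mpr hxh)⟩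
      linarith
  · intro x hx
    set k₀ := ⌊1/(4*δ)⌋₊ with hk₀
    have h4δ : 0 < 4*δ := by linarith
    have h1k : (1:ℝ) ≤ 1/(4*δ) := by
      rw [le_div_iff₀ h4δ]
      linarith
    have hfl : (k₀:ℝ) ≤ 1/(4*δ) := by rw [hk₀]; exact Nat.floor_le (by positivity)
    have hquarter : (1/(4*δ))*δ = 1/4 := by field_simp
    have hk₀δ : (k₀:ℝ)*δ ≤ 1/4 := by
      calc (k₀:ℝ)*δ ≤ (1/(4*δ))*δ := mul_le_mul_of_nonneg_right hfl hδ.le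
        _ = 1/4 := hquarter
    obtain ⟨h1, h2, h3⟩ := hx
    have hpow : 0 ≤ (1-c₀)^k₀ := pow_nonneg (by linarith) k₀
    by_cases hxh : hG g x < δ
    · have := hkey k₀ x ⟨by linarith, h2, hxh⟩
      linarith
    · push_neg at hxh
      have hxΩ : x ∈ cylC g 1 1 := ⟨by linarith, h2, by linarith⟩
      have hw0 := hpos x ⟨hxΩ, fun hmem => absurd hmem.2.2 (not_lt.mpr hxh)⟩
      linarith
end Chunk9
end
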